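/- Let p > q ≥ 1 be coprime integers. Let (e_1, …, e_k) be a list of integers with each e_i ≥ 2 whose Hirzebruch–Jung continued fraction value equals p/q, and let (e'_1, …, e'_{k'}) be a list of integers with each e'_j ≥ 2 whose Hirzebruch–Jung continued fraction value equals p/(p−q). Then k' = 1 + ∑_{i=1}^{k} (e_i − 2); equivalently, setting e = 3 + ∑_{i=1}^{k}(e_i − 2) (the embedding dimension of the cyclic quotient singularity), one has k' = e − 2. -/
import Mathlib


/-- The Hirzebruch–Jung continued fraction `[e_1, …, e_k] = e_1 − 1/[e_2, …, e_k]`,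
with `[e_k] = e_k` (junk value `1` on the empty list). -/
def hjcf : List ℚ → ℚ
  | [] => 1
  | [e] => e
  | e :: f :: rest => e - 1 / hjcf (f :: rest)

lemma hjcf_singleton (e : ℚ) : hjcf [e] = e := rfl

lemma hjcf_cons' (e : ℚ) (L : List ℚ) (h : L ≠ []) : hjcf (e :: L) = e - 1 / hjcf L := by
  cases L with
  | nil => exact absurd rfl h
  | cons f r => rfl

lemma hjcf_cons (e f : ℚ) (r : List ℚ) : hjcf (e :: f :: r) = e - 1 / hjcf (f :: r) := rfl

lemma hjcf_one_lt : ∀ L : List ℚ, L ≠ [] → (∀ x ∈ L, (2:ℚ) ≤ x) → 1 < hjcf L := by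
  intro L
  induction L with
  | nil => simp
  | cons e tl ih =>
    intro _ hall
    cases tl with
    | nil =>
      have : (2:ℚ) ≤ e := hall e (by simp)
      simpa [hjcf] using by linarith
    | cons f r =>
      have h1 : 1 < hjcf (f :: r) := ih (by simp) (fun x hx => hall x (by simp [hx]))
      have he : (2:ℚ) ≤ e := hall e (by simp)
      rw [hjcf_cons]
      have h0 : 0 < hjcf (f :: r) := by linarith
      have : 1 / hjcf (f :: r) < 1 := by
        rw [div_lt_one h0]; linarith
      linarith

lemma hjcf_pos_inv (f : ℚ) (r : List ℚ) (h : ∀ x ∈ f :: r, (2:ℚ) ≤ x) :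
    0 < 1 / hjcf (f :: r) ∧ 1 / hjcf (f :: r) < 1 := by
  have h1 : 1 < hjcf (f :: r) := hjcf_one_lt _ (by simp) h
  constructor
  · positivity
  · rw [div_lt_one (by linarith)]; linarith

lemma hjcf_inj : ∀ L M : List ℤ, L ≠ [] → M ≠ [] →
    (∀ x ∈ L, (2:ℤ) ≤ x) → (∀ x ∈ M, (2:ℤ) ≤ x) →
    hjcf (L.map (fun x : ℤ => (x:ℚ))) = hjcf (M.map (fun x : ℤ => (x:ℚ))) → L = M := by
  intro L
  induction L with
  | nil => simp
  | cons a as ih =>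
    intro M _ hMne hL hM heq
    cases M with
    | nil => exact absurd rfl hMne
    | cons b bs =>
      cases as with
      | nil =>
        cases bs with
        | nil =>
          simp only [List.map, hjcf] at heq
          exact_mod_cast congrArg (fun x => [x]) (show a = b by exact_mod_cast heq)
        | cons f r =>
          exfalso
          have hb : (2:ℤ) ≤ b := hM b (by simp)
          have hinv := hjcf_pos_inv (f:ℚ) (r.map (fun x : ℤ => (x:ℚ)))
            (by intro x hx; simp at hx
                rcases hx with h | ⟨y, hy, rfl⟩
                · subst h; exact_mod_cast hM f (by simp)
                · exact_mod_cast hM y (by simp [hy]))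
          simp only [List.map, hjcf_cons, hjcf_singleton] at heq
          have h1 : ((b:ℚ)) - 1 < (a:ℚ) := by rw [heq]; linarith [hinv.2]
          have h2 : (a:ℚ) < b := by rw [heq]; linarith [hinv.1]
          have h1' : b - 1 < a := by exact_mod_cast h1
          have h2' : a < b := by exact_mod_cast h2
          omega
      | cons f r =>
        have hinvL := hjcf_pos_inv (f:ℚ) (r.map (fun x : ℤ => (x:ℚ)))
          (by intro x hx; simp at hx
              rcases hx with h | ⟨y, hy, rfl⟩
              · subst h; exact_mod_cast hL f (by simp)
              · exact_mod_cast hL y (by simp [hy]))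
        cases bs with
        | nil =>
          exfalso
          simp only [List.map, hjcf_cons, hjcf_singleton] at heq
          have h1 : ((a:ℚ)) - 1 < (b:ℚ) := by linarith [hinvL.2]
          have h2 : (b:ℚ) < a := by linarith [hinvL.1]
          have h1' : a - 1 < b := by exact_mod_cast h1
          have h2' : b < a := by exact_mod_cast h2
          omega
        | cons g s =>
          have hinvM := hjcf_pos_inv (g:ℚ) (s.map (fun x : ℤ => (x:ℚ)))
            (by intro x hx; simp at hx
                rcases hx with h | ⟨y, hy, rfl⟩
                · subst h; exact_mod_cast hM g (by simp)
                · exact_mod_cast hM y (by simp [hy]))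
          simp only [List.map, hjcf_cons] at heq
          have hab : a = b := by
            have h1 : (a:ℚ) < b + 1 := by linarith [hinvL.1, hinvL.2, hinvM.1, hinvM.2]
            have h2 : (b:ℚ) < a + 1 := by linarith [hinvL.1, hinvL.2, hinvM.1, hinvM.2]
            have h1' : a < b + 1 := by exact_mod_cast h1
            have h2' : b < a + 1 := by exact_mod_cast h2
            omega
          subst hab
          have hL1 : (1:ℚ) < hjcf ((f:ℚ) :: r.map (fun x : ℤ => (x:ℚ))) :=
            hjcf_one_lt _ (by simp)
              (by intro x hx; simp at hx
                  rcases hx with h | ⟨y, hy, rfl⟩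
                  · subst h; exact_mod_cast hL f (by simp)
                  · exact_mod_cast hL y (by simp [hy]))
          have hM1 : (1:ℚ) < hjcf ((g:ℚ) :: s.map (fun x : ℤ => (x:ℚ))) :=
            hjcf_one_lt _ (by simp)
              (by intro x hx; simp at hx
                  rcases hx with h | ⟨y, hy, rfl⟩
                  · subst h; exact_mod_cast hM g (by simp)
                  · exact_mod_cast hM y (by simp [hy]))
          have heq2 : hjcf ((f:ℚ) :: r.map (fun x : ℤ => (x:ℚ))) =
              hjcf ((g:ℚ) :: s.map (fun x : ℤ => (x:ℚ))) := by
            have h1 : (1:ℚ) / hjcf ((f:ℚ) :: r.map (fun x : ℤ => (x:ℚ))) =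
                1 / hjcf ((g:ℚ) :: s.map (fun x : ℤ => (x:ℚ))) := by linarith
            field_simp at h1
            linarith
          have := ih (g :: s) (by simp) (by simp)
            (fun x hx => hL x (by simp at hx ⊢; tauto))
            (fun x hx => hM x (by simp at hx ⊢; tauto))
            (by simpa using heq2)
          rw [this]

def Good (p q : ℤ) : Prop :=
  ∃ A B : List ℤ, A ≠ [] ∧ B ≠ [] ∧ (∀ x ∈ A, (2:ℤ) ≤ x) ∧ (∀ x ∈ B, (2:ℤ) ≤ x) ∧
    hjcf (A.map (fun x : ℤ => (x:ℚ))) = (p:ℚ) / q ∧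
    hjcf (B.map (fun x : ℤ => (x:ℚ))) = (p:ℚ) / ((p:ℚ) - q) ∧
    (B.length : ℤ) = 1 + (A.map (fun x => x - 2)).sum ∧
    (A.length : ℤ) = 1 + (B.map (fun x => x - 2)).sum

lemma good_symm (p q : ℤ) (h : Good p q) : Good p (p - q) := by
  obtain ⟨A, B, hA, hB, hA2, hB2, hvA, hvB, hlB, hlA⟩ := h
  refine ⟨B, A, hB, hA, hB2, hA2, ?_, ?_, hlA, hlB⟩
  · rw [hvB]; push_cast; ring_nf
  · rw [hvA]; push_cast; ring_nf

lemma hjcf_head_add_one (e : ℚ) (r : List ℚ) :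
    hjcf ((e + 1) :: r) = 1 + hjcf (e :: r) := by
  cases r with
  | nil => simp [hjcf]; ring
  | cons f s => simp [hjcf_cons]; ring

lemma good_step (a b : ℤ) (hb : 1 ≤ b) (hba : b < a) (h : Good a b) : Good (a + b) b := by
  obtain ⟨A, B, hA, hB, hA2, hB2, hvA, hvB, hlB, hlA⟩ := h
  cases A with
  | nil => exact absurd rfl hA
  | cons e rest =>
    refine ⟨(e + 1) :: rest, 2 :: B, by simp, by simp, ?_, ?_, ?_, ?_, ?_, ?_⟩
    · intro x hx
      rcases List.mem_cons.1 hx with rfl | hx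
      · have := hA2 e (by simp); omega
      · exact hA2 x (by simp [hx])
    · intro x hx
      rcases List.mem_cons.1 hx with rfl | hx
      · norm_num
      · exact hB2 x hx
    · have : ((e:ℤ) + 1 : ℤ) :: rest = (e + 1) :: rest := rfl
      rw [List.map_cons]
      push_cast
      rw [hjcf_head_add_one]
      have hb0 : (b:ℚ) ≠ 0 := by positivity
      rw [show ((e:ℚ) :: rest.map (fun x : ℤ => (x:ℚ))) =
        ((e :: rest).map (fun x : ℤ => (x:ℚ))) from rfl, hvA]
      field_simp
      ring
    · cases B with
      | nil => exact absurd rfl hB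
      | cons g s =>
        rw [List.map_cons, hjcf_cons' _ _ (by simp), hvB]
        have ha0 : (0:ℚ) < (a:ℚ) := by exact_mod_cast (by omega : (0:ℤ) < a)
        have hab0 : (0:ℚ) < (a:ℚ) - b := by
          have : (b:ℚ) < a := by exact_mod_cast hba
          linarith
        have haab : ((a:ℚ) + b) - b = (a:ℚ) := by ring
        push_cast
        rw [haab]
        field_simp
        ring
    · simp only [List.length_cons, List.map_cons, List.sum_cons] at hlB ⊢
      push_cast at hlB ⊢
      omega
    · simp only [List.length_cons, List.map_cons, List.sum_cons] at hlA ⊢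
      push_cast at hlA ⊢
      omega

lemma good_all : ∀ n : ℕ, ∀ p q : ℤ, p.toNat ≤ n → 1 ≤ q → q < p → IsCoprime p q → Good p q := by
  intro n
  induction n with
  | zero => intro p q hpn hq hqp _; omega
  | succ n ih =>
    intro p q hpn hq hqp hcop
    rcases lt_trichotomy (2 * q) p with h | h | h
    · -- 2q < p : reduce to (p - q, q)
      have hcop' : IsCoprime (p - q) q := by
        have := hcop.add_mul_left_left (-1)
        simpa [sub_eq_add_neg, mul_comm] using this
      have hg : Good (p - q) q := ih (p - q) q (by omega) hq (by omega) hcop'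
      have := good_step (p - q) q hq (by omega) hg
      simpa using this
    · -- 2q = p : coprime forces q = 1, p = 2
      have hq1 : q = 1 := by
        have hdvd : q ∣ p := ⟨2, by omega⟩
        have := hcop.symm
        have : IsUnit q := IsCoprime.isUnit_of_dvd' this (dvd_refl q) hdvd
        rcases Int.isUnit_iff.1 this with h1 | h1 <;> omega
      have hp2 : p = 2 := by omega
      subst hq1 hp2
      refine ⟨[2], [2], by simp, by simp, by simp, by simp, ?_, ?_, by simp, by simp⟩
      · norm_num [hjcf]
      · norm_num [hjcf]
    · -- 2q > p : reduce to (q, p - q), then step and symm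
      have hcopq : IsCoprime q (p - q) := by
        have := (hcop.symm.add_mul_left_right (-1))
        simpa [sub_eq_add_neg, mul_comm] using this
      have hg : Good q (p - q) := ih q (p - q) (by omega) (by omega) (by omega) hcopq
      have hstep := good_step q (p - q) (by omega) (by omega) hg
      have : Good p (p - q) := by
        have h1 : q + (p - q) = p := by ring
        rwa [h1] at hstep
      have := good_symm p (p - q) this
      simpa using this

/-- Riemenschneider: if `[e_1,…,e_k] = p/q` and
`[e'_1,…,e'_{k'}] = p/(p−q)` are the dual Hirzebruch–Jung expansions, then
`k' = 1 + ∑ (e_i − 2)`; equivalently, with the embedding dimension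
`e = 3 + ∑ (e_i − 2)`, one has `k' = e − 2`. -/
theorem riemenschneider_length (p q : ℤ) (hq1 : 1 ≤ q) (hqp : q < p)
    (hcop : IsCoprime p q)
    (E E' : List ℤ) (hne : E ≠ []) (hne' : E' ≠ [])
    (hE : ∀ x ∈ E, 2 ≤ x) (hE' : ∀ x ∈ E', 2 ≤ x)
    (hval : hjcf (E.map (fun x : ℤ => (x : ℚ))) = (p : ℚ) / (q : ℚ))
    (hval' : hjcf (E'.map (fun x : ℤ => (x : ℚ))) = (p : ℚ) / ((p : ℚ) - (q : ℚ))) :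
    (E'.length : ℤ) = 1 + (E.map (fun x => x - 2)).sum ∧
      (E'.length : ℤ) = (3 + (E.map (fun x => x - 2)).sum) - 2 := by
  obtain ⟨A, B, hA, hB, hA2, hB2, hvA, hvB, hlB, hlA⟩ :=
    good_all p.toNat p q le_rfl hq1 hqp hcop
  have hEA : E = A := hjcf_inj E A hne hA hE hA2 (by rw [hval, hvA])
  have hEB : E' = B := hjcf_inj E' B hne' hB hE' hB2 (by rw [hval', hvB])
  subst hEA hEB
  exact ⟨hlB, by omega⟩
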